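/- (Single-buyer profit approximation) For any single unit-demand buyer with value distribution D over m items (finite support) and any production-cost vector c ∈ ℝ_{≥0}^m, the optimal expected profit achievable by any buy-many mechanism under doubled costs 2c is at most 2 ln(4m) times the optimal expected profit achievable by a deterministic item pricing under costs c: BuyManyProfit_{2c}(D) ≤ 2 ln(4m) · SProfit_c(D). -/

import Mathlib

open scoped Classical

/-- A lottery over `m` items: a sub-probability vector. -/
def IsLottery {m : ℕ} (lam : Fin m → ℝ) : Prop :=
  (∀ j, 0 ≤ lam j) ∧ ∑ j, lam j ≤ 1

/-- `phat p i`: the cheapest per-unit cost of obtaining item `i` from pricing `p`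
by (repeatedly) purchasing a lottery containing it. -/
noncomputable def phat {m : ℕ} (p : (Fin m → ℝ) → ℝ) (i : Fin m) : ℝ :=
  sInf {r | ∃ lam, IsLottery lam ∧ 0 < lam i ∧ r = p lam / lam i}

/-- The buy-many constraint for a pricing function on lotteries. -/
def BuyMany {m : ℕ} (p : (Fin m → ℝ) → ℝ) : Prop :=
  ∀ lam, IsLottery lam → p lam ≤ ∑ i, lam i * phat p i

private lemma stmt10_aux (a b c d : ℝ) (h1 : d ≤ a) (h2 : a ≤ 3/2*d)
    (hb : 0 ≤ b) (hc : 0 ≤ c) : a * (b - 2*c) ≤ 2*d*(3/4*b - c) := by nlinarith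

set_option maxHeartbeats 1000000 in
/-- single-buyer profit approximation: for a unit-demand buyer with a
finite-support value distribution (types `V` with weights `w`) over `m` items and
production costs `c ≥ 0`, the expected profit of any buy-many mechanism `p` under
doubled costs `2c` is at most `2 ln(4m)` times the expected profit of some
deterministic item pricing `q` (with a utility-maximizing selection rule `sel`)
under costs `c`. -/
theorem stmt10 {m k : ℕ} (hm : 1 ≤ m)
    (V : Fin k → Fin m → ℝ) (w : Fin k → ℝ)
    (hw : ∀ t, 0 ≤ w t) (hw1 : ∑ t, w t = 1)
    (hV : ∀ t j, 0 ≤ V t j)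
    (c : Fin m → ℝ) (hc : ∀ j, 0 ≤ c j)
    (p : (Fin m → ℝ) → ℝ)
    (hp0 : p (fun _ => 0) = 0)
    (hpnn : ∀ lam, IsLottery lam → 0 ≤ p lam)
    (hbm : BuyMany p)
    (Λ : Fin k → Fin m → ℝ) (hΛ : ∀ t, IsLottery (Λ t))
    (hargmax : ∀ t mu, IsLottery mu →
      (∑ j, V t j * mu j) - p mu ≤ (∑ j, V t j * Λ t j) - p (Λ t)) :
    ∃ (q : Fin m → ℝ) (sel : Fin k → Option (Fin m)),
      (∀ t : Fin k, (sel t).elim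
        (∀ i, V t i - q i ≤ 0)
        (fun j => 0 ≤ V t j - q j ∧ ∀ i, V t i - q i ≤ V t j - q j)) ∧
      ∑ t, w t * (p (Λ t) - 2 * ∑ j, c j * Λ t j)
        ≤ 2 * Real.log (4 * m) *
            ∑ t, w t * (sel t).elim 0 (fun j => q j - c j) := by
  classical
  have hmR : (1:ℝ) ≤ (m:ℝ) := by exact_mod_cast hm
  have hmpos : (0:ℝ) < (m:ℝ) := by linarith
  have hmne : (Finset.univ : Finset (Fin m)).Nonempty := ⟨⟨0, hm⟩, Finset.mem_univ _⟩
  set pH : Fin m → ℝ := phat p with hpHdef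
  -- unit lotteries
  have hunit : ∀ j : Fin m, IsLottery (fun i => if i = j then (1:ℝ) else 0) := by
    intro j
    refine ⟨fun i => by dsimp only; split <;> norm_num, by simp⟩
  have hpe : ∀ j : Fin m, p (fun i => if i = j then (1:ℝ) else 0) ≤ pH j := by
    intro j
    have h := hbm _ (hunit j)
    simpa [ite_mul, Finset.sum_ite_eq'] using h
  -- phat facts
  have hbdd : ∀ j : Fin m, BddBelow {r | ∃ lam, IsLottery lam ∧ 0 < lam j ∧ r = p lam / lam j} := by
    intro j
    refine ⟨0, fun r hr => ?_⟩
    obtain ⟨lam, hl, hpos, rfl⟩ := hr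
    exact div_nonneg (hpnn lam hl) (le_of_lt hpos)
  have hneS : ∀ j : Fin m, ∃ r, r ∈ {r | ∃ lam, IsLottery lam ∧ 0 < lam j ∧ r = p lam / lam j} := by
    intro j
    exact ⟨_, ⟨_, hunit j, by simp, rfl⟩⟩
  have hpH0 : ∀ j, 0 ≤ pH j := by
    intro j
    refine le_csInf ⟨_, (hneS j).choose_spec⟩ ?_
    rintro r ⟨lam, hl, hpos, rfl⟩
    exact div_nonneg (hpnn lam hl) (le_of_lt hpos)
  have hkey : ∀ lam, IsLottery lam → ∀ j, lam j * pH j ≤ p lam := by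
    intro lam hl j
    rcases eq_or_lt_of_le (hl.1 j) with h0 | h0
    · rw [← h0, zero_mul]; exact hpnn lam hl
    · have h1 : pH j ≤ p lam / lam j := csInf_le (hbdd j) ⟨lam, hl, h0, rfl⟩
      have h2 : lam j * pH j ≤ lam j * (p lam / lam j) :=
        mul_le_mul_of_nonneg_left h1 (le_of_lt h0)
      rwa [mul_div_cancel₀ _ (ne_of_gt h0)] at h2 
  -- buyer's utility under p and related facts
  have hu0 : ∀ t, 0 ≤ (∑ j, V t j * Λ t j) - p (Λ t) := by
    intro t
    have h := hargmax t (fun _ => 0) ⟨fun j => le_refl 0, by simp⟩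
    simpa [hp0] using h
  have hP0 : ∀ t, 0 ≤ p (Λ t) := fun t => hpnn _ (hΛ t)
  have hcΛ0 : ∀ t, 0 ≤ ∑ j, c j * Λ t j :=
    fun t => Finset.sum_nonneg fun j _ => mul_nonneg (hc j) ((hΛ t).1 j)
  have hupper : ∀ t j, V t j - pH j ≤ (∑ j, V t j * Λ t j) - p (Λ t) := by
    intro t j
    have h1 := hargmax t _ (hunit j)
    have h2 : (∑ i, V t i * (if i = j then (1:ℝ) else 0)) = V t j := by
      simp [mul_ite, Finset.sum_ite_eq']
    rw [h2] at h1
    have := hpe j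
    linarith
  -- the buyer's utility under scaled item pricings
  set U : Fin k → ℝ → ℝ :=
    fun t ξ => max 0 (Finset.univ.sup' hmne fun j => V t j - c j - ξ * pH j) with hUdef
  have hU0 : ∀ t ξ, 0 ≤ U t ξ := fun t ξ => le_max_left _ _
  have hUlb : ∀ t ξ j, V t j - c j - ξ * pH j ≤ U t ξ := by
    intro t ξ j
    exact le_max_of_le_right (Finset.le_sup' (fun j => V t j - c j - ξ * pH j) (Finset.mem_univ j))
  have hUub : ∀ t ξ x, 0 ≤ x → (∀ j, V t j - c j - ξ * pH j ≤ x) → U t ξ ≤ x := by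
    intro t ξ x hx h
    exact max_le hx (Finset.sup'_le _ _ fun j _ => h j)
  have hUsum : ∀ t ξ, (∑ j, Λ t j * (V t j - c j - ξ * pH j)) ≤ U t ξ := by
    intro t ξ
    calc ∑ j, Λ t j * (V t j - c j - ξ * pH j)
        ≤ ∑ j, Λ t j * U t ξ :=
          Finset.sum_le_sum fun j _ => mul_le_mul_of_nonneg_left (hUlb t ξ j) ((hΛ t).1 j)
      _ = (∑ j, Λ t j) * U t ξ := (Finset.sum_mul _ _ _).symm
      _ ≤ 1 * U t ξ := mul_le_mul_of_nonneg_right (hΛ t).2 (hU0 t ξ)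
      _ = U t ξ := one_mul _
  set S : ℝ := Real.log (4 * m) with hSdef
  have hSpos : 0 < S := Real.log_pos (by linarith)
  have hxm : Real.exp (-S) = ((4:ℝ) * m)⁻¹ := by
    rw [Real.exp_neg, Real.exp_log (by positivity)]
  have hUhigh : ∀ t, U t 1 ≤ (∑ j, V t j * Λ t j) - p (Λ t) := by
    intro t
    refine hUub t 1 _ (hu0 t) fun j => ?_
    have := hupper t j
    have := hc j
    linarith
  have hUlow : ∀ t, ((∑ j, V t j * Λ t j) - p (Λ t)) + 3/4 * p (Λ t) - (∑ j, c j * Λ t j)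
      ≤ U t (Real.exp (-S)) := by
    intro t
    have e1 : ∑ j, Λ t j * (V t j - c j - Real.exp (-S) * pH j)
        = (∑ j, V t j * Λ t j) - (∑ j, c j * Λ t j)
          - Real.exp (-S) * ∑ j, Λ t j * pH j := by
      rw [Finset.mul_sum, ← Finset.sum_sub_distrib, ← Finset.sum_sub_distrib]
      exact Finset.sum_congr rfl fun j _ => by ring
    have e2 : ∑ j, Λ t j * pH j ≤ (m:ℝ) * p (Λ t) := by
      calc ∑ j, Λ t j * pH j ≤ ∑ _j : Fin m, p (Λ t) :=
            Finset.sum_le_sum fun j _ => hkey (Λ t) (hΛ t) j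
        _ = (m:ℝ) * p (Λ t) := by
            simp [Finset.sum_const, nsmul_eq_mul]
    have e3 : Real.exp (-S) * ∑ j, Λ t j * pH j ≤ 1/4 * p (Λ t) := by
      have h1 : Real.exp (-S) * ∑ j, Λ t j * pH j ≤ Real.exp (-S) * ((m:ℝ) * p (Λ t)) :=
        mul_le_mul_of_nonneg_left e2 (le_of_lt (Real.exp_pos _))
      have h2 : Real.exp (-S) * ((m:ℝ) * p (Λ t)) = 1/4 * p (Λ t) := by
        rw [hxm]
        field_simp
      linarith
    have := hUsum t (Real.exp (-S))
    rw [e1] at this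
    linarith
  -- the geometric grid of scales
  set N : ℕ := ⌈2 * S⌉₊ with hNdef
  have hN2S : 2 * S ≤ (N:ℝ) := Nat.le_ceil _
  have hNpos : 0 < N := by
    rw [hNdef]
    exact Nat.ceil_pos.mpr (by linarith)
  have hNR : (0:ℝ) < (N:ℝ) := by exact_mod_cast hNpos
  set hstep : ℝ := S / N with hhdef
  have hh0 : 0 < hstep := div_pos hSpos hNR
  have hh2 : hstep ≤ 1/2 := by
    rw [hhdef, div_le_iff₀ hNR]
    linarith
  set E : ℝ := Real.exp hstep - 1 with hEdef
  have hE0 : 0 < E := by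
    have := Real.add_one_le_exp hstep
    have h2 : (1:ℝ) < Real.exp hstep := by nlinarith [Real.add_one_le_exp hstep]
    simp only [hEdef]
    linarith
  have hEh : hstep ≤ E := by
    have := Real.add_one_le_exp hstep
    simp only [hEdef]; linarith
  have hEub : E ≤ hstep + hstep^2 := by
    have habs : |hstep| ≤ 1 := by rw [abs_of_pos hh0]; linarith
    have hb := Real.exp_bound habs (n := 2)
    have h2 : |Real.exp hstep - (1 + hstep)| ≤ |hstep|^2 * (3/(2*2)) := by
      norm_num [Finset.sum_range_succ] at hb ⊢
      convert hb using 2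
    have := abs_le.1 h2
    have hsq : |hstep|^2 = hstep^2 := sq_abs hstep
    simp only [hEdef]
    nlinarith [abs_nonneg hstep]
  have hNh : (N:ℝ) * hstep = S := by
    rw [hhdef]; field_simp
  have hNE1 : S ≤ (N:ℝ) * E := by
    calc S = (N:ℝ) * hstep := hNh.symm
      _ ≤ (N:ℝ) * E := mul_le_mul_of_nonneg_left hEh (le_of_lt hNR)
  have hNE2 : (N:ℝ) * E ≤ 3/2 * S := by
    have h1 : (N:ℝ) * E ≤ (N:ℝ) * (hstep + hstep^2) :=
      mul_le_mul_of_nonneg_left hEub (le_of_lt hNR)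
    have h2 : (N:ℝ) * (hstep + hstep^2) = S + S * hstep := by
      rw [pow_two, mul_add, ← mul_assoc, hNh]
    nlinarith [hSpos]
  set sc : ℕ → ℝ := fun i => Real.exp (-((i:ℝ) * hstep)) with hscdef
  have hsc0 : sc 0 = 1 := by simp [hscdef]
  have hscN : sc N = Real.exp (-S) := by
    simp only [hscdef]
    rw [hNh]
  have hscpos : ∀ i, 0 < sc i := fun i => Real.exp_pos _
  have hscrel : ∀ i : ℕ, sc i = sc (i+1) * Real.exp hstep := by
    intro i
    simp only [hscdef]
    rw [← Real.exp_add]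
    congr 1
    push_cast
    ring
  -- optimal selection under the item pricing at scale ξ
  have hselE : ∀ ξ : ℝ, ∃ sel : Fin k → Option (Fin m),
      ∀ t, (sel t).elim (∀ i, V t i - (ξ * pH i + c i) ≤ 0)
        (fun j => 0 ≤ V t j - (ξ * pH j + c j) ∧
          ∀ i, V t i - (ξ * pH i + c i) ≤ V t j - (ξ * pH j + c j)) := by
    intro ξ
    have hex : ∀ t, ∃ o : Option (Fin m),
        o.elim (∀ i, V t i - (ξ * pH i + c i) ≤ 0)
          (fun j => 0 ≤ V t j - (ξ * pH j + c j) ∧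
            ∀ i, V t i - (ξ * pH i + c i) ≤ V t j - (ξ * pH j + c j)) := by
      intro t
      obtain ⟨j0, -, hj0⟩ :=
        Finset.exists_max_image Finset.univ (fun i => V t i - (ξ * pH i + c i)) hmne
      by_cases h0 : 0 ≤ V t j0 - (ξ * pH j0 + c j0)
      · exact ⟨some j0, h0, fun i => hj0 i (Finset.mem_univ i)⟩
      · refine ⟨none, fun i => ?_⟩
        exact le_trans (hj0 i (Finset.mem_univ i)) (le_of_not_ge h0)
    choose sel hsel using hex
    exact ⟨sel, hsel⟩
  choose SEL HSEL using hselE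
  set prof : ℝ → Fin k → ℝ := fun ξ t => (SEL ξ t).elim 0 fun j => ξ * pH j with hprofdef
  have hprof0 : ∀ ξ t, 0 ≤ ξ → 0 ≤ prof ξ t := by
    intro ξ t hξ
    simp only [hprofdef]
    cases SEL ξ t with
    | none => simp
    | some j => simpa using mul_nonneg hξ (hpH0 j)
  -- the key step inequality along the grid
  have hstepineq : ∀ t (i : ℕ),
      U t (sc (i+1)) - U t (sc i) ≤ E * prof (sc (i+1)) t := by
    intro t i
    have hrel : sc i - sc (i+1) = sc (i+1) * E := by
      rw [hscrel i]
      simp only [hEdef]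
      ring
    have hs := HSEL (sc (i+1)) t
    rcases hSEL : SEL (sc (i+1)) t with _ | j
    · rw [hSEL] at hs
      simp only [Option.elim] at hs
      have hU1 : U t (sc (i+1)) ≤ 0 := by
        refine hUub t _ 0 le_rfl fun j => ?_
        have := hs j
        linarith
      have hU2 : 0 ≤ U t (sc i) := hU0 t _
      have : prof (sc (i+1)) t = 0 := by simp [hprofdef, hSEL]
      rw [this]
      linarith
    · rw [hSEL] at hs
      simp only [Option.elim] at hs
      obtain ⟨hj1, hj2⟩ := hs
      have hU1 : U t (sc (i+1)) ≤ V t j - c j - sc (i+1) * pH j := by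
        refine hUub t _ _ (by linarith) fun i' => ?_
        have := hj2 i'
        linarith
      have hU2 : V t j - c j - sc i * pH j ≤ U t (sc i) := hUlb t _ j
      have hpr : prof (sc (i+1)) t = sc (i+1) * pH j := by simp [hprofdef, hSEL]
      rw [hpr]
      have hd : sc i * pH j - sc (i+1) * pH j = E * (sc (i+1) * pH j) := by
        calc sc i * pH j - sc (i+1) * pH j = (sc i - sc (i+1)) * pH j := by ring
          _ = (sc (i+1) * E) * pH j := by rw [hrel]
          _ = E * (sc (i+1) * pH j) := by ring
      linarith
  -- telescoping
  have htel : ∀ t, U t (sc N) - U t (sc 0)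
      ≤ E * ∑ i ∈ Finset.range N, prof (sc (i+1)) t := by
    intro t
    have hsum := Finset.sum_range_sub (fun i => U t (sc i)) N
    rw [← hsum, Finset.mul_sum]
    exact Finset.sum_le_sum fun i _ => hstepineq t i
  have hmain : ∀ t, 3/4 * p (Λ t) - (∑ j, c j * Λ t j)
      ≤ E * ∑ i ∈ Finset.range N, prof (sc (i+1)) t := by
    intro t
    have h1 := htel t
    rw [hsc0, hscN] at h1
    have h2 := hUlow t
    have h3 := hUhigh t
    have h4 : 3/4 * p (Λ t) - (∑ j, c j * Λ t j) ≤ U t (Real.exp (-S)) - U t 1 := by linarith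
    exact le_trans h4 h1
  -- weighted sums and choosing the best scale on the grid
  set G : ℕ → ℝ := fun i => ∑ t, w t * prof (sc (i+1)) t with hGdef
  have hG0 : ∀ i, 0 ≤ G i := fun i =>
    Finset.sum_nonneg fun t _ => mul_nonneg (hw t) (hprof0 _ t (le_of_lt (hscpos _)))
  have hsumall : ∑ t, w t * (3/4 * p (Λ t) - (∑ j, c j * Λ t j))
      ≤ E * ∑ i ∈ Finset.range N, G i := by
    calc ∑ t, w t * (3/4 * p (Λ t) - (∑ j, c j * Λ t j))
        ≤ ∑ t, w t * (E * ∑ i ∈ Finset.range N, prof (sc (i+1)) t) :=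
          Finset.sum_le_sum fun t _ => mul_le_mul_of_nonneg_left (hmain t) (hw t)
      _ = ∑ t, ∑ i ∈ Finset.range N, E * (w t * prof (sc (i+1)) t) := by
          refine Finset.sum_congr rfl fun t _ => ?_
          rw [Finset.mul_sum, Finset.mul_sum]
          exact Finset.sum_congr rfl fun i _ => by ring
      _ = ∑ i ∈ Finset.range N, ∑ t, E * (w t * prof (sc (i+1)) t) := Finset.sum_comm
      _ = E * ∑ i ∈ Finset.range N, G i := by
          simp only [hGdef]
          rw [Finset.mul_sum]
          exact Finset.sum_congr rfl fun i _ => (Finset.mul_sum _ _ _).symm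
  obtain ⟨i0, hi0mem, hi0⟩ :=
    Finset.exists_max_image (Finset.range N) G ⟨0, Finset.mem_range.mpr hNpos⟩
  have hsumG : ∑ i ∈ Finset.range N, G i ≤ (N:ℝ) * G i0 := by
    calc ∑ i ∈ Finset.range N, G i ≤ ∑ _i ∈ Finset.range N, G i0 :=
          Finset.sum_le_sum fun i hi => hi0 i hi
      _ = (N:ℝ) * G i0 := by simp [nsmul_eq_mul]
  have hpt : ∀ t, ((N:ℝ)*E) * (p (Λ t) - 2 * ∑ j, c j * Λ t j)
      ≤ 2*S * (3/4 * p (Λ t) - (∑ j, c j * Λ t j)) := by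
    intro t
    exact stmt10_aux ((N:ℝ)*E) (p (Λ t)) (∑ j, c j * Λ t j) S hNE1 hNE2 (hP0 t) (hcΛ0 t)
  have hfinal1 : ((N:ℝ)*E) * (∑ t, w t * (p (Λ t) - 2 * ∑ j, c j * Λ t j))
      ≤ 2*S * ∑ t, w t * (3/4 * p (Λ t) - (∑ j, c j * Λ t j)) := by
    rw [Finset.mul_sum, Finset.mul_sum]
    refine Finset.sum_le_sum fun t _ => ?_
    calc ((N:ℝ)*E) * (w t * (p (Λ t) - 2 * ∑ j, c j * Λ t j))
        = w t * (((N:ℝ)*E) * (p (Λ t) - 2 * ∑ j, c j * Λ t j)) := by ring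
      _ ≤ w t * (2*S * (3/4 * p (Λ t) - (∑ j, c j * Λ t j))) :=
          mul_le_mul_of_nonneg_left (hpt t) (hw t)
      _ = 2*S * (w t * (3/4 * p (Λ t) - (∑ j, c j * Λ t j))) := by ring
  have hbig : ((N:ℝ)*E) * (∑ t, w t * (p (Λ t) - 2 * ∑ j, c j * Λ t j))
      ≤ ((N:ℝ)*E) * (2*S*G i0) := by
    calc ((N:ℝ)*E) * (∑ t, w t * (p (Λ t) - 2 * ∑ j, c j * Λ t j))
        ≤ 2*S * ∑ t, w t * (3/4 * p (Λ t) - (∑ j, c j * Λ t j)) := hfinal1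
      _ ≤ 2*S * (E * ∑ i ∈ Finset.range N, G i) :=
          mul_le_mul_of_nonneg_left hsumall (by linarith)
      _ ≤ 2*S * (E * ((N:ℝ) * G i0)) := by
          refine mul_le_mul_of_nonneg_left ?_ (by linarith)
          exact mul_le_mul_of_nonneg_left hsumG (le_of_lt hE0)
      _ = ((N:ℝ)*E) * (2*S*G i0) := by ring
  have hT : (∑ t, w t * (p (Λ t) - 2 * ∑ j, c j * Λ t j)) ≤ 2*S*G i0 :=
    le_of_mul_le_mul_left hbig (mul_pos hNR hE0)
  refine ⟨fun j => sc (i0+1) * pH j + c j, SEL (sc (i0+1)), fun t => HSEL (sc (i0+1)) t, ?_⟩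
  have hGeq : ∑ t, w t * ((SEL (sc (i0+1)) t).elim 0
      fun j => (fun j => sc (i0+1) * pH j + c j) j - c j) = G i0 := by
    simp only [hGdef, hprofdef]
    refine Finset.sum_congr rfl fun t _ => ?_
    cases hs : SEL (sc (i0+1)) t with
    | none => simp
    | some j => simp
  rw [hGeq]
  exact hT
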